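/- Let x : ℝ → ℝ be differentiable with x'(t) = 2 + sin(x(t)) for every t ∈ ℝ. Then x(t + 2π/√3) = x(t) + 2π for every t ∈ ℝ. -/

import Mathlib

open Real

noncomputable def Fchar : ℝ → ℝ :=
  fun y => y / Real.sqrt 3 + (2 / Real.sqrt 3) * Real.arctan (Real.cos y / (Real.sin y + 2 + Real.sqrt 3))

lemma sqrt3_pos : (0:ℝ) < Real.sqrt 3 := Real.sqrt_pos.mpr (by norm_num)

lemma denom_pos (y : ℝ) : 0 < Real.sin y + 2 + Real.sqrt 3 := by
  have h := Real.neg_one_le_sin y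
  have := sqrt3_pos
  linarith

lemma Fchar_algebra (s c r : ℝ) (hs3 : r * r = 3) (hd : 0 < s + 2 + r) (h2 : 0 < 2 + s)
    (hr : 0 < r) (hc : c^2 = 1 - s^2) :
    1 / (2 + s) = 1 / r + 2 / r * (1 / (1 + (c / (s + 2 + r)) ^ 2) * ((-s * (s + 2 + r) - c * c) / (s + 2 + r) ^ 2)) := by
  have h1 : 1 + (c / (s + 2 + r))^2 = (2*(2+r)*(2+s))/(s+2+r)^2 := by
    field_simp
    nlinarith [hc, hs3]
  rw [h1]
  have h2r : (0:ℝ) < 2 + r := by linarith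
  field_simp
  linear_combination hs3 + hc

lemma Fchar_hasDeriv (y : ℝ) : HasDerivAt Fchar (1 / (2 + Real.sin y)) y := by
  have hs3 : Real.sqrt 3 * Real.sqrt 3 = 3 := Real.mul_self_sqrt (by norm_num)
  have hd := denom_pos y
  have hsin : HasDerivAt Real.sin (Real.cos y) y := Real.hasDerivAt_sin y
  have hcos : HasDerivAt Real.cos (-Real.sin y) y := Real.hasDerivAt_cos y
  have hden : HasDerivAt (fun z => Real.sin z + 2 + Real.sqrt 3) (Real.cos y) y := by
    simpa using (hsin.add_const 2).add_const (Real.sqrt 3)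
  have hquot : HasDerivAt (fun z => Real.cos z / (Real.sin z + 2 + Real.sqrt 3))
      ((-Real.sin y * (Real.sin y + 2 + Real.sqrt 3) - Real.cos y * Real.cos y)
        / (Real.sin y + 2 + Real.sqrt 3)^2) y :=
    hcos.div hden (ne_of_gt hd)
  have harctan : HasDerivAt Real.arctan
      (1 / (1 + (Real.cos y / (Real.sin y + 2 + Real.sqrt 3))^2))
      (Real.cos y / (Real.sin y + 2 + Real.sqrt 3)) := Real.hasDerivAt_arctan _
  have hcomp := harctan.comp y hquot
  have hid : HasDerivAt (fun z : ℝ => z / Real.sqrt 3) (1 / Real.sqrt 3) y := by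
    simpa using (hasDerivAt_id y).div_const (Real.sqrt 3)
  have hF := hid.add (hcomp.const_mul (2 / Real.sqrt 3))
  have hc : Real.cos y ^ 2 = 1 - Real.sin y ^ 2 := by
    have := Real.sin_sq_add_cos_sq y; linarith
  have h2 : (0:ℝ) < 2 + Real.sin y := by
    have := Real.neg_one_le_sin y; linarith
  have halg := Fchar_algebra (Real.sin y) (Real.cos y) (Real.sqrt 3) hs3 hd h2 sqrt3_pos hc
  rw [halg]
  exact hF

lemma Fchar_strictMono : StrictMono Fchar := by
  apply strictMono_of_deriv_pos
  intro y
  rw [(Fchar_hasDeriv y).deriv]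
  have h2 : (0:ℝ) < 2 + Real.sin y := by
    have := Real.neg_one_le_sin y; linarith
  positivity

lemma Fchar_period (y : ℝ) : Fchar (y + 2 * π) = Fchar y + 2 * π / Real.sqrt 3 := by
  unfold Fchar
  rw [Real.sin_add_two_pi, Real.cos_add_two_pi]
  ring

/-- Every solution of the characteristic ODE `x' = 2 + sin x` advances by
exactly one spatial period `2π` over the time interval `2π/√3`. -/
theorem characteristic_period_advance
    (x : ℝ → ℝ) (hx : Differentiable ℝ x)
    (hode : ∀ t : ℝ, deriv x t = 2 + Real.sin (x t)) :
    ∀ t : ℝ, x (t + 2 * π / Real.sqrt 3) = x t + 2 * π := by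
  intro t
  set T := 2 * π / Real.sqrt 3 with hT
  have hH : ∀ s : ℝ, HasDerivAt (fun u => Fchar (x u) - u) 0 s := by
    intro s
    have hxs : HasDerivAt x (2 + Real.sin (x s)) s := by
      have := (hx s).hasDerivAt
      rwa [hode s] at this
    have hcomp := (Fchar_hasDeriv (x s)).comp s hxs
    have h2 : (2:ℝ) + Real.sin (x s) ≠ 0 := by
      have := Real.neg_one_le_sin (x s); intro h; linarith
    have := hcomp.sub (hasDerivAt_id s)
    have heq : 1 / (2 + Real.sin (x s)) * (2 + Real.sin (x s)) - 1 = 0 := by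
      field_simp
      ring
    rw [heq] at this
    exact this
  have hconst : ∀ a b : ℝ, Fchar (x a) - a = Fchar (x b) - b := by
    intro a b
    exact is_const_of_deriv_eq_zero (fun u => ((hH u).differentiableAt))
      (fun u => (hH u).deriv) a b
  have key : Fchar (x (t + T)) = Fchar (x t + 2 * π) := by
    have h1 := hconst (t + T) t
    rw [Fchar_period]
    linarith
  exact Fchar_strictMono.injective key
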